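/- If T : E → F is a bounded linear operator between Banach spaces, then T maps ℓ_p^mid(E) into ℓ_p^mid(F), the induced map T̂((x_j)) = (T(x_j)) is a bounded linear operator, and ‖T̂‖ = ‖T‖ (linear stability of the sequence class ℓ_p^mid). -/

import Mathlib

open Filter
open scoped ENNReal

noncomputable section

section Defs

variable {E : Type*}

/-- `x ∈ ℓ_p(E)`: absolutely `p`-summable sequences. -/
def MemLpSeq [NormedAddCommGroup E] (p : ℝ) (x : ℕ → E) : Prop :=
  Summable fun j => ‖x j‖ ^ p

/-- The `ℓ_p` norm `(Σ ‖x j‖^p)^(1/p)`. -/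
def lpNorm [NormedAddCommGroup E] (p : ℝ) (x : ℕ → E) : ℝ :=
  (∑' j, ‖x j‖ ^ p) ^ (1 / p)

/-- `x ∈ ℓ_p^w(E)`: weakly `p`-summable sequences. -/
def WSummable [NormedAddCommGroup E] [NormedSpace ℝ E] (p : ℝ) (x : ℕ → E) : Prop :=
  ∀ f : E →L[ℝ] ℝ, Summable fun j => |f (x j)| ^ p

/-- The weak `ℓ_p` norm `sup_{‖f‖ ≤ 1} (Σ |f (x j)|^p)^(1/p)`. -/
def wNorm [NormedAddCommGroup E] [NormedSpace ℝ E] (p : ℝ) (x : ℕ → E) : ℝ :=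
  ⨆ f : {f : E →L[ℝ] ℝ // ‖f‖ ≤ 1}, (∑' j, |f.1 (x j)| ^ p) ^ (1 / p)

/-- `x ∈ ℓ_p^{mid}(E)`: mid `p`-summable sequences. -/
def MidSummable [NormedAddCommGroup E] [NormedSpace ℝ E] (p : ℝ) (x : ℕ → E) : Prop :=
  WSummable p x ∧ ∀ xs : ℕ → E →L[ℝ] ℝ, WSummable p xs →
    Summable fun nj : ℕ × ℕ => |xs nj.1 (x nj.2)| ^ p

/-- The mid `ℓ_p` norm: sup over the unit ball of `ℓ_p^w(E*)` of the double `ℓ_p` sum. -/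
def midNorm [NormedAddCommGroup E] [NormedSpace ℝ E] (p : ℝ) (x : ℕ → E) : ℝ :=
  ⨆ xs : {xs : ℕ → E →L[ℝ] ℝ // WSummable p xs ∧ wNorm p xs ≤ 1},
    (∑' nj : ℕ × ℕ, |xs.1 nj.1 (x nj.2)| ^ p) ^ (1 / p)

/-- `x ∈ ℓ_p^u(E)`: unconditionally `p`-summable sequences (weak norms of tails tend to 0). -/
def USummable [NormedAddCommGroup E] [NormedSpace ℝ E] (p : ℝ) (x : ℕ → E) : Prop :=
  WSummable p x ∧ Tendsto (fun k => wNorm p fun j => x (j + k)) atTop (nhds 0)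

/-- `x ∈ c₀₀(E)`: finitely supported sequences. -/
def FinSupp [Zero E] (x : ℕ → E) : Prop := ∃ N, ∀ j ≥ N, x j = 0

/-- Truncation of a sequence at index `k`. -/
def trunc [Zero E] (k : ℕ) (x : ℕ → E) : ℕ → E := fun j => if j < k then x j else 0

end Defs

section Helpers
variable {G : Type*} [NormedAddCommGroup G] [NormedSpace ℝ G]

lemma hp0 {p : ℝ} (hp : 1 ≤ p) : 0 < p := lt_of_lt_of_le one_pos hp

lemma rpow_inv_p {p : ℝ} (hp : 1 ≤ p) {t : ℝ} (ht : 0 ≤ t) : (t ^ (1/p)) ^ p = t := by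
  rw [← Real.rpow_mul ht, one_div, inv_mul_cancel₀ (hp0 hp).ne', Real.rpow_one]

lemma rpow_p_inv {p : ℝ} (hp : 1 ≤ p) {t : ℝ} (ht : 0 ≤ t) : (t ^ p) ^ (1/p) = t := by
  rw [← Real.rpow_mul ht, mul_one_div, div_self (hp0 hp).ne', Real.rpow_one]

/-- Uniform boundedness: a weakly p-summable sequence has uniformly bounded weak sums. -/
lemma key_ub {p : ℝ} (hp : 1 ≤ p) {x : ℕ → G} (hx : WSummable p x) :
    ∃ C : ℝ, 0 ≤ C ∧ ∀ f : G →L[ℝ] ℝ, ‖f‖ ≤ 1 → (∑' j, |f (x j)| ^ p) ≤ C := by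
  set P : ℝ≥0∞ := ENNReal.ofReal p with hP
  have hPt : P.toReal = p := ENNReal.toReal_ofReal (hp0 hp).le
  haveI : Fact (1 ≤ P) := ⟨ENNReal.one_le_ofReal.mpr hp⟩
  have hPt0 : 0 < P.toReal := by rw [hPt]; exact hp0 hp
  -- single as a CLM from ℝ
  let sg : ℕ → ℝ →L[ℝ] lp (fun _ : ℕ => ℝ) P := fun j =>
    LinearMap.mkContinuous
      { toFun := fun c => lp.single P j c
        map_add' := fun a b => by
          apply lp.ext
          funext i
          by_cases h : i = j <;> simp [lp.single_apply, h]
        map_smul' := fun c a => by simpa using lp.single_smul (E := fun _ : ℕ => ℝ) P j c a }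
      1 (fun c => by
        simpa [lp.norm_single (E := fun _ : ℕ => ℝ) (p := P) (lt_of_lt_of_le zero_lt_one (Fact.out : 1 ≤ P)) j c] using le_refl ‖c‖)
  have hsg : ∀ j c, sg j c = lp.single P j c := fun _ _ => rfl
  let g : Finset ℕ → (G →L[ℝ] ℝ) →L[ℝ] lp (fun _ : ℕ => ℝ) P := fun s =>
    ∑ j ∈ s, (sg j).comp (ContinuousLinearMap.apply ℝ ℝ (x j))
  have hg : ∀ s f, g s f = ∑ j ∈ s, lp.single P j ((fun i => f (x i)) j) := by
    intro s f
    simp [g, ContinuousLinearMap.sum_apply, hsg]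
  have hnorm : ∀ s f, ‖g s f‖ ^ p = ∑ j ∈ s, |f (x j)| ^ p := by
    intro s f
    rw [hg]
    rw [← hPt]
    rw [lp.norm_sum_single hPt0 (fun i => f (x i)) s]
    simp [hPt, Real.norm_eq_abs]
  obtain ⟨C', hC'⟩ := banach_steinhaus (g := g) (fun f => by
    refine ⟨(∑' j, |f (x j)| ^ p) ^ (1/p), fun s => ?_⟩
    have h1 : ‖g s f‖ = (∑ j ∈ s, |f (x j)| ^ p) ^ (1/p) := by
      rw [← hnorm s f, rpow_p_inv hp (norm_nonneg _)]
    rw [h1]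
    refine Real.rpow_le_rpow (Finset.sum_nonneg fun j _ => Real.rpow_nonneg (abs_nonneg _) p)
      (Summable.sum_le_tsum s (fun j _ => Real.rpow_nonneg (abs_nonneg _) p) (hx f))
      (by positivity))
  refine ⟨(max C' 0) ^ p, Real.rpow_nonneg (le_max_right _ _) _, fun f hf => ?_⟩
  refine Summable.tsum_le_of_sum_le (hx f) fun s => ?_
  rw [← hnorm s f]
  refine Real.rpow_le_rpow (norm_nonneg _) ?_ (hp0 hp).le
  calc ‖g s f‖ ≤ ‖g s‖ * ‖f‖ := (g s).le_opNorm f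
  _ ≤ C' * 1 := mul_le_mul (hC' s) hf (norm_nonneg _) ((norm_nonneg _).trans (hC' s))
  _ ≤ max C' 0 := by simp
end Helpers

section Helpers2
variable {G : Type*} [NormedAddCommGroup G] [NormedSpace ℝ G]

lemma wnorm_bddAbove {p : ℝ} (hp : 1 ≤ p) {x : ℕ → G} (hx : WSummable p x) :
    BddAbove (Set.range fun f : {f : G →L[ℝ] ℝ // ‖f‖ ≤ 1} =>
      (∑' j, |f.1 (x j)| ^ p) ^ (1 / p)) := by
  obtain ⟨C, hC0, hC⟩ := key_ub hp hx
  refine ⟨C ^ (1/p), ?_⟩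
  rintro _ ⟨f, rfl⟩
  exact Real.rpow_le_rpow (tsum_nonneg fun j => Real.rpow_nonneg (abs_nonneg _) _)
    (hC f.1 f.2) (by positivity)

lemma le_wNorm {p : ℝ} (hp : 1 ≤ p) {x : ℕ → G} (hx : WSummable p x)
    (f : G →L[ℝ] ℝ) (hf : ‖f‖ ≤ 1) :
    (∑' j, |f (x j)| ^ p) ^ (1 / p) ≤ wNorm p x :=
  le_ciSup (wnorm_bddAbove hp hx) (⟨f, hf⟩ : {f : G →L[ℝ] ℝ // ‖f‖ ≤ 1})

lemma wNorm_nonneg {p : ℝ} {x : ℕ → G} : 0 ≤ wNorm p x :=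
  Real.iSup_nonneg fun f => Real.rpow_nonneg
    (tsum_nonneg fun j => Real.rpow_nonneg (abs_nonneg _) _) _

lemma tsum_le_of_wnorm {p : ℝ} (hp : 1 ≤ p) {x : ℕ → G} (hx : WSummable p x)
    (h1 : wNorm p x ≤ 1) (Φ : G →L[ℝ] ℝ) : (∑' j, |Φ (x j)| ^ p) ≤ ‖Φ‖ ^ p := by
  rcases eq_or_ne Φ 0 with rfl | hΦ
  · simp [Real.zero_rpow (hp0 hp).ne']
  · have hΦn : 0 < ‖Φ‖ := norm_pos_iff.mpr hΦ
    set Ψ : G →L[ℝ] ℝ := ‖Φ‖⁻¹ • Φ with hΨ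
    have hΨ1 : ‖Ψ‖ ≤ 1 := by
      have : ‖Ψ‖ = ‖Φ‖⁻¹ * ‖Φ‖ := by
        rw [hΨ]; rw [norm_smul ‖Φ‖⁻¹ Φ, norm_inv, norm_norm]
      rw [this, inv_mul_cancel₀ hΦn.ne']
    have h2 : (∑' j, |Ψ (x j)| ^ p) ≤ 1 := by
      have := le_wNorm hp hx Ψ hΨ1
      have h3 := this.trans h1
      calc (∑' j, |Ψ (x j)| ^ p)
          = (((∑' j, |Ψ (x j)| ^ p) ^ (1/p)) ^ p) := by
            rw [rpow_inv_p hp (tsum_nonneg fun j => Real.rpow_nonneg (abs_nonneg _) _)]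
        _ ≤ 1 ^ p := Real.rpow_le_rpow
            (Real.rpow_nonneg (tsum_nonneg fun j => Real.rpow_nonneg (abs_nonneg _) _) _)
            h3 (hp0 hp).le
        _ = 1 := Real.one_rpow p
    have hptw : ∀ j, |Φ (x j)| ^ p = ‖Φ‖ ^ p * |Ψ (x j)| ^ p := by
      intro j
      have : Ψ (x j) = ‖Φ‖⁻¹ * Φ (x j) := rfl
      rw [this, abs_mul, abs_inv, abs_norm, ← Real.mul_rpow hΦn.le (by positivity),
        ← mul_assoc, mul_inv_cancel₀ hΦn.ne', one_mul]
    calc (∑' j, |Φ (x j)| ^ p) = ∑' j, ‖Φ‖ ^ p * |Ψ (x j)| ^ p := by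
          exact tsum_congr hptw
      _ = ‖Φ‖ ^ p * ∑' j, |Ψ (x j)| ^ p := tsum_mul_left
      _ ≤ ‖Φ‖ ^ p * 1 := by
          exact mul_le_mul_of_nonneg_left h2 (Real.rpow_nonneg hΦn.le _)
      _ = ‖Φ‖ ^ p := mul_one _
end Helpers2

section Helpers3
variable {G : Type*} [NormedAddCommGroup G] [NormedSpace ℝ G]

set_option maxHeartbeats 1000000 in
lemma mid_bddAbove {p : ℝ} (hp : 1 ≤ p) {x : ℕ → G} (hx : MidSummable p x) :
    BddAbove (Set.range fun xs : {xs : ℕ → G →L[ℝ] ℝ // WSummable p xs ∧ wNorm p xs ≤ 1} =>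
      (∑' nj : ℕ × ℕ, |xs.1 nj.1 (x nj.2)| ^ p) ^ (1 / p)) := by
  by_contra hbd
  rw [not_bddAbove_iff] at hbd
  have hch : ∀ k : ℕ, ∃ u : {xs : ℕ → G →L[ℝ] ℝ // WSummable p xs ∧ wNorm p xs ≤ 1},
      ((k : ℝ) + 1) * 2 ^ (k + 1) < (∑' nj : ℕ × ℕ, |u.1 nj.1 (x nj.2)| ^ p) ^ (1 / p) := by
    intro k
    obtain ⟨y, hy, hlt⟩ := hbd (((k : ℝ) + 1) * 2 ^ (k + 1))
    obtain ⟨u, rfl⟩ := hy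
    exact ⟨u, hlt⟩
  choose u hu using hch
  set a : ℕ → ℝ := fun k => (2 : ℝ)⁻¹ ^ (k + 1) with ha
  have ha0 : ∀ k, 0 < a k := fun k => by positivity
  have ha1 : ∀ k, a k ≤ 1 := fun k => pow_le_one₀ (by norm_num) (by norm_num)
  have hap : ∀ k, a k ^ p ≤ a k := fun k => by
    calc a k ^ p ≤ a k ^ (1 : ℝ) := Real.rpow_le_rpow_of_exponent_ge (ha0 k) (ha1 k) hp
    _ = a k := Real.rpow_one _
  have hageom : Summable a := by
    have : a = fun k => 2⁻¹ * (2⁻¹ : ℝ) ^ k := funext fun k => pow_succ' _ _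
    rw [this]
    exact (summable_geometric_of_lt_one (by norm_num) (by norm_num)).mul_left _
  have hapow : ∀ k, a k ^ p = ((2⁻¹ : ℝ) ^ p) ^ (k + 1) := by
    intro k
    show ((2:ℝ)⁻¹ ^ (k + 1)) ^ p = _
    rw [← Real.rpow_natCast (2⁻¹ : ℝ) (k + 1), ← Real.rpow_mul (by norm_num), mul_comm,
      Real.rpow_mul (by norm_num), Real.rpow_natCast]
  have hapgeom : Summable fun k => a k ^ p := by
    have h2 : (fun k => a k ^ p) = fun k => (2⁻¹ : ℝ) ^ p * ((2⁻¹ : ℝ) ^ p) ^ k := by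
      funext k; rw [hapow k, pow_succ']
    rw [h2]
    exact (summable_geometric_of_lt_one (by positivity)
      (Real.rpow_lt_one (by norm_num) (by norm_num) (hp0 hp))).mul_left _
  set e : ℕ ≃ ℕ × ℕ := (Denumerable.eqv (ℕ × ℕ)).symm with he
  set zs : ℕ → G →L[ℝ] ℝ := fun m => a (e m).1 • (u (e m).1).1 (e m).2 with hzs
  have hpt1 : ∀ (Φ : (G →L[ℝ] ℝ) →L[ℝ] ℝ) (kn : ℕ × ℕ),
      |Φ (a kn.1 • (u kn.1).1 kn.2)| ^ p = a kn.1 ^ p * |Φ ((u kn.1).1 kn.2)| ^ p := by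
    intro Φ kn
    rw [map_smul, smul_eq_mul, abs_mul, abs_of_pos (ha0 _),
      Real.mul_rpow (ha0 _).le (abs_nonneg _)]
  have hpt2 : ∀ (kn : ℕ × ℕ) (j : ℕ),
      |(a kn.1 • (u kn.1).1 kn.2) (x j)| ^ p = a kn.1 ^ p * |(u kn.1).1 kn.2 (x j)| ^ p := by
    intro kn j
    rw [ContinuousLinearMap.smul_apply, smul_eq_mul, abs_mul, abs_of_pos (ha0 _),
      Real.mul_rpow (ha0 _).le (abs_nonneg _)]
  have hFsum : ∀ Φ : (G →L[ℝ] ℝ) →L[ℝ] ℝ,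
      Summable fun kn : ℕ × ℕ => a kn.1 ^ p * |Φ ((u kn.1).1 kn.2)| ^ p := by
    intro Φ
    rw [summable_prod_of_nonneg (Pi.le_def.mpr fun kn => by
      simp only [Pi.zero_apply]
      exact mul_nonneg (Real.rpow_nonneg (ha0 _).le _) (Real.rpow_nonneg (abs_nonneg _) _))]
    refine ⟨fun k => ?_, ?_⟩
    · have h2 := ((u k).2.1 Φ).mul_left (a k ^ p)
      exact h2
    refine Summable.of_nonneg_of_le
      (fun k => tsum_nonneg fun n =>
        mul_nonneg (Real.rpow_nonneg (ha0 _).le _) (Real.rpow_nonneg (abs_nonneg _) _))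
      (fun k => ?_) (hapgeom.mul_right (‖Φ‖ ^ p))
    have hrw : (fun n : ℕ => a (k, n).1 ^ p * |Φ ((u (k, n).1).1 (k, n).2)| ^ p)
        = fun n => a k ^ p * |Φ ((u k).1 n)| ^ p := rfl
    rw [hrw, tsum_mul_left]
    exact mul_le_mul_of_nonneg_left (tsum_le_of_wnorm hp (u k).2.1 (u k).2.2 Φ)
      (Real.rpow_nonneg (ha0 k).le _)
  have hzsW : WSummable p zs := by
    intro Φ
    have h1 : (fun m => |Φ (zs m)| ^ p)
        = (fun kn : ℕ × ℕ => a kn.1 ^ p * |Φ ((u kn.1).1 kn.2)| ^ p) ∘ e :=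
      funext fun m => hpt1 Φ (e m)
    rw [h1]
    exact (e.summable_iff).mpr (hFsum Φ)
  have hzs1 : wNorm p zs ≤ 1 := by
    refine Real.iSup_le (fun Φ => ?_) zero_le_one
    have h1 : (fun m => |Φ.1 (zs m)| ^ p)
        = (fun kn : ℕ × ℕ => a kn.1 ^ p * |Φ.1 ((u kn.1).1 kn.2)| ^ p) ∘ e :=
      funext fun m => hpt1 Φ.1 (e m)
    have he1 : ∑' m, |Φ.1 (zs m)| ^ p
        = ∑' kn : ℕ × ℕ, a kn.1 ^ p * |Φ.1 ((u kn.1).1 kn.2)| ^ p := by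
      rw [h1, Function.comp_def]
      exact e.tsum_eq (fun kn : ℕ × ℕ => a kn.1 ^ p * |Φ.1 ((u kn.1).1 kn.2)| ^ p)
    have hb : ∑' m, |Φ.1 (zs m)| ^ p ≤ 1 := by
      rw [he1, Summable.tsum_prod (hFsum Φ.1)]
      have hsums := ((summable_prod_of_nonneg (Pi.le_def.mpr fun kn => by
        simp only [Pi.zero_apply]
        exact mul_nonneg (Real.rpow_nonneg (ha0 _).le _)
          (Real.rpow_nonneg (abs_nonneg _) _))).mp (hFsum Φ.1)).2
      calc (∑' k, ∑' n, a k ^ p * |Φ.1 ((u k).1 n)| ^ p) ≤ ∑' k, a k ^ p := by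
            refine Summable.tsum_le_tsum (fun k => ?_) hsums hapgeom
            rw [tsum_mul_left]
            calc a k ^ p * ∑' n, |Φ.1 ((u k).1 n)| ^ p ≤ a k ^ p * ‖Φ.1‖ ^ p :=
                  mul_le_mul_of_nonneg_left (tsum_le_of_wnorm hp (u k).2.1 (u k).2.2 Φ.1)
                    (Real.rpow_nonneg (ha0 k).le _)
              _ ≤ a k ^ p * 1 := mul_le_mul_of_nonneg_left
                  (Real.rpow_le_one (norm_nonneg _) Φ.2 (hp0 hp).le)
                  (Real.rpow_nonneg (ha0 k).le _)
              _ = a k ^ p := mul_one _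
        _ ≤ ∑' k, a k := Summable.tsum_le_tsum hap hapgeom hageom
        _ = ∑' k, 2⁻¹ * (2⁻¹ : ℝ) ^ k := by
            exact tsum_congr fun k => pow_succ' _ _
        _ = 1 := by
            rw [tsum_mul_left, tsum_geometric_of_lt_one (by norm_num) (by norm_num)]
            norm_num
    calc (∑' m, |Φ.1 (zs m)| ^ p) ^ (1 / p) ≤ (1 : ℝ) ^ (1 / p) :=
          Real.rpow_le_rpow (tsum_nonneg fun m => by positivity) hb (by positivity)
      _ = 1 := Real.one_rpow _
  have hT : Summable fun mj : ℕ × ℕ => |zs mj.1 (x mj.2)| ^ p := hx.2 zs hzsW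
  set Tot := ∑' mj : ℕ × ℕ, |zs mj.1 (x mj.2)| ^ p with hTotdef
  set G2 : (ℕ × ℕ) × ℕ → ℝ :=
    fun knj => a knj.1.1 ^ p * |(u knj.1.1).1 knj.1.2 (x knj.2)| ^ p with hG2def
  have he2 : (fun mj : ℕ × ℕ => |zs mj.1 (x mj.2)| ^ p)
      = G2 ∘ (e.prodCongr (Equiv.refl ℕ)) := funext fun mj => hpt2 (e mj.1) mj.2
  have hG2 : Summable G2 := by
    rw [he2] at hT
    exact ((e.prodCongr (Equiv.refl ℕ)).summable_iff).mp hT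
  have hTot2 : ∑' knj, G2 knj = Tot := by
    rw [hTotdef, he2]
    exact ((e.prodCongr (Equiv.refl ℕ)).tsum_eq G2).symm
  set pa := Equiv.prodAssoc ℕ ℕ ℕ with hpa
  set G3 : ℕ × (ℕ × ℕ) → ℝ := G2 ∘ pa.symm with hG3def
  have hG3 : Summable G3 := (pa.symm.summable_iff).mpr hG2
  have hTot3 : ∑' knj, G3 knj = Tot := by rw [← hTot2]; exact pa.symm.tsum_eq G2
  have hG3nn : ∀ knj : ℕ × (ℕ × ℕ), 0 ≤ G3 knj := fun knj =>
    mul_nonneg (Real.rpow_nonneg (ha0 _).le _) (Real.rpow_nonneg (abs_nonneg _) _)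
  obtain ⟨hrows, hsums⟩ := (summable_prod_of_nonneg (Pi.le_def.mpr fun knj => by
    simp only [Pi.zero_apply]; exact hG3nn knj)).mp hG3
  have hblock : ∀ k, a k ^ p * (∑' nj : ℕ × ℕ, |(u k).1 nj.1 (x nj.2)| ^ p) ≤ Tot := by
    intro k
    have h1 : ∑' nj : ℕ × ℕ, G3 (k, nj)
        = a k ^ p * ∑' nj : ℕ × ℕ, |(u k).1 nj.1 (x nj.2)| ^ p := by
      rw [← tsum_mul_left]
      exact tsum_congr fun nj => rfl
    rw [← h1, ← hTot3, Summable.tsum_prod hG3]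
    exact Summable.le_tsum hsums k (fun k' _ => tsum_nonneg fun nj => hG3nn (k', nj))
  obtain ⟨k, hk⟩ := exists_nat_gt Tot
  set D := (∑' nj : ℕ × ℕ, |(u k).1 nj.1 (x nj.2)| ^ p) ^ (1 / p) with hD
  have htnn : 0 ≤ ∑' nj : ℕ × ℕ, |(u k).1 nj.1 (x nj.2)| ^ p :=
    tsum_nonneg fun nj => Real.rpow_nonneg (abs_nonneg _) _
  have hD0 : 0 ≤ D := Real.rpow_nonneg htnn _
  have hDp : D ^ p = ∑' nj : ℕ × ℕ, |(u k).1 nj.1 (x nj.2)| ^ p := rpow_inv_p hp htnn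
  have h2k : a k * 2 ^ (k + 1) = 1 := by
    rw [ha, ← mul_pow]
    norm_num
  have hbase : (k : ℝ) + 1 < a k * D := by
    calc (k : ℝ) + 1 = ((k : ℝ) + 1) * (a k * 2 ^ (k + 1)) := by rw [h2k, mul_one]
      _ = a k * (((k : ℝ) + 1) * 2 ^ (k + 1)) := by ring
      _ < a k * D := mul_lt_mul_of_pos_left (hu k) (ha0 k)
  have h1b : (1 : ℝ) ≤ a k * D := le_trans (by linarith [(Nat.cast_nonneg k : (0:ℝ) ≤ k)]) hbase.le
  have hfin : a k * D ≤ Tot := by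
    calc a k * D = (a k * D) ^ (1 : ℝ) := (Real.rpow_one _).symm
      _ ≤ (a k * D) ^ p := Real.rpow_le_rpow_of_exponent_le h1b hp
      _ = a k ^ p * D ^ p := Real.mul_rpow (ha0 k).le hD0
      _ = a k ^ p * ∑' nj : ℕ × ℕ, |(u k).1 nj.1 (x nj.2)| ^ p := by rw [hDp]
      _ ≤ Tot := hblock k
  linarith
end Helpers3


lemma midNorm_nonneg {G : Type*} [NormedAddCommGroup G] [NormedSpace ℝ G] {p : ℝ} {x : ℕ → G} :
    0 ≤ midNorm p x :=
  Real.iSup_nonneg fun xs => Real.rpow_nonneg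
    (tsum_nonneg fun nj => Real.rpow_nonneg (abs_nonneg _) _) _


private def pbF {E F : Type*} [NormedAddCommGroup E] [NormedSpace ℝ E]
    [NormedAddCommGroup F] [NormedSpace ℝ F] (T : E →L[ℝ] F)
    (Φ : (E →L[ℝ] ℝ) →L[ℝ] ℝ) : (F →L[ℝ] ℝ) →L[ℝ] ℝ :=
  LinearMap.mkContinuous
    { toFun := fun g => Φ (g.comp T)
      map_add' := fun g h => by
        simp only [ContinuousLinearMap.add_comp, map_add]
      map_smul' := fun c g => by
        simp only [ContinuousLinearMap.smul_comp, map_smul, RingHom.id_apply] }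
    (‖Φ‖ * ‖T‖) (fun g => by
      calc ‖Φ (g.comp T)‖ ≤ ‖Φ‖ * ‖g.comp T‖ := Φ.le_opNorm _
        _ ≤ ‖Φ‖ * (‖g‖ * ‖T‖) :=
            mul_le_mul_of_nonneg_left (g.opNorm_comp_le T) (by positivity)
        _ = ‖Φ‖ * ‖T‖ * ‖g‖ := by ring)

private lemma pbF_apply {E F : Type*} [NormedAddCommGroup E] [NormedSpace ℝ E]
    [NormedAddCommGroup F] [NormedSpace ℝ F] (T : E →L[ℝ] F)
    (Φ : (E →L[ℝ] ℝ) →L[ℝ] ℝ) (g : F →L[ℝ] ℝ) : pbF T Φ g = Φ (g.comp T) := rfl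

/-- linear stability of `ℓ_p^{mid}`: any bounded operator `T : E → F` maps
`ℓ_p^{mid}(E)` into `ℓ_p^{mid}(F)`, the induced map is bounded with
`‖T̂ x‖_{mid,p} ≤ ‖T‖ ‖x‖_{mid,p}`, and `‖T‖` is the least such constant, i.e.
`‖T̂‖ = ‖T‖`. -/
theorem stmt_12 {E F : Type*} [NormedAddCommGroup E] [NormedSpace ℝ E] [CompleteSpace E]
    [NormedAddCommGroup F] [NormedSpace ℝ F] [CompleteSpace F]
    (p : ℝ) (hp : 1 ≤ p) (T : E →L[ℝ] F) :
    (∀ x : ℕ → E, MidSummable p x → MidSummable p fun j => T (x j)) ∧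
    (∀ x : ℕ → E, MidSummable p x → midNorm p (fun j => T (x j)) ≤ ‖T‖ * midNorm p x) ∧
    (∀ C : ℝ, 0 ≤ C →
      (∀ x : ℕ → E, MidSummable p x → midNorm p (fun j => T (x j)) ≤ C * midNorm p x) →
      ‖T‖ ≤ C) := by
  have hpne : p ≠ 0 := (hp0 hp).ne'
  -- Part 1
  have part1 : ∀ x : ℕ → E, MidSummable p x → MidSummable p fun j => T (x j) := by
    intro x hx
    constructor
    · intro f
      exact (hx.1 (f.comp T)).congr fun j => by simp
    · intro xs hxs
      have hws : WSummable p fun n => (xs n).comp T := by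
        intro Φ
        exact (hxs (pbF T Φ)).congr fun j => by rw [pbF_apply]
      exact (hx.2 _ hws).congr fun nj => by simp
  -- Part 2
  have part2 : ∀ x : ℕ → E, MidSummable p x →
      midNorm p (fun j => T (x j)) ≤ ‖T‖ * midNorm p x := by
    intro x hx
    unfold midNorm
    refine Real.iSup_le (fun xs => ?_) (mul_nonneg (norm_nonneg T) midNorm_nonneg)
    rcases eq_or_ne T 0 with rfl | hT
    · have h0 : ∀ nj : ℕ × ℕ, |xs.1 nj.1 ((fun j => (0 : E →L[ℝ] F) (x j)) nj.2)| ^ p = 0 := by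
        intro nj
        simp [Real.zero_rpow hpne]
      calc (∑' nj : ℕ × ℕ, |xs.1 nj.1 ((fun j => (0 : E →L[ℝ] F) (x j)) nj.2)| ^ p) ^ (1 / p)
          = (0 : ℝ) ^ (1 / p) := by rw [tsum_congr h0, tsum_zero]
        _ = 0 := Real.zero_rpow (by positivity)
        _ ≤ ‖(0 : E →L[ℝ] F)‖ * midNorm p x := mul_nonneg (norm_nonneg _) midNorm_nonneg
    · have hTn : 0 < ‖T‖ := norm_pos_iff.mpr hT
      set ys : ℕ → E →L[ℝ] ℝ := fun n => ‖T‖⁻¹ • ((xs.1 n).comp T) with hys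
      have hysW : WSummable p ys := by
        intro Φ
        have hrw : (fun n => |Φ (ys n)| ^ p)
            = fun n => |(‖T‖⁻¹ • pbF T Φ) (xs.1 n)| ^ p := by
          funext n
          simp [hys, map_smul, pbF_apply]
        rw [hrw]
        exact xs.2.1 (‖T‖⁻¹ • pbF T Φ)
      have hys1 : wNorm p ys ≤ 1 := by
        unfold wNorm
        refine Real.iSup_le (fun Φ => ?_) zero_le_one
        set Ψ : (F →L[ℝ] ℝ) →L[ℝ] ℝ := ‖T‖⁻¹ • pbF T Φ.1 with hΨ
        have hΨ1 : ‖Ψ‖ ≤ 1 := by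
          refine ContinuousLinearMap.opNorm_le_bound _ zero_le_one fun g => ?_
          have h1 : Ψ g = ‖T‖⁻¹ * Φ.1 (g.comp T) := by simp [hΨ, pbF_apply]
          rw [h1]
          calc ‖‖T‖⁻¹ * Φ.1 (g.comp T)‖ = ‖T‖⁻¹ * ‖Φ.1 (g.comp T)‖ := by
                rw [norm_mul, norm_inv, norm_norm]
            _ ≤ ‖T‖⁻¹ * (‖Φ.1‖ * ‖g.comp T‖) := by
                refine mul_le_mul_of_nonneg_left (Φ.1.le_opNorm _) (by positivity)
            _ ≤ ‖T‖⁻¹ * (1 * (‖g‖ * ‖T‖)) := by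
                refine mul_le_mul_of_nonneg_left ?_ (by positivity)
                exact mul_le_mul Φ.2 (ContinuousLinearMap.opNorm_comp_le g T)
                  (norm_nonneg _) zero_le_one
            _ = ‖T‖⁻¹ * ‖T‖ * ‖g‖ := by ring
            _ = 1 * ‖g‖ := by rw [inv_mul_cancel₀ hTn.ne']
        have hrw : (fun n => |Φ.1 (ys n)| ^ p) = fun n => |Ψ (xs.1 n)| ^ p := by
          funext n
          have : Φ.1 (ys n) = Ψ (xs.1 n) := by simp [hys, hΨ, pbF_apply, map_smul]
          rw [this]
        rw [hrw]
        exact (le_wNorm hp xs.2.1 Ψ hΨ1).trans xs.2.2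
      have hkey : ∀ nj : ℕ × ℕ, |xs.1 nj.1 (T (x nj.2))| ^ p
          = ‖T‖ ^ p * |ys nj.1 (x nj.2)| ^ p := by
        intro nj
        have h1 : ys nj.1 (x nj.2) = ‖T‖⁻¹ * xs.1 nj.1 (T (x nj.2)) := by simp [hys]
        rw [h1, abs_mul, abs_inv, abs_norm, ← Real.mul_rpow hTn.le (by positivity),
          ← mul_assoc, mul_inv_cancel₀ hTn.ne', one_mul]
      have hsnn : 0 ≤ ∑' nj : ℕ × ℕ, |ys nj.1 (x nj.2)| ^ p :=
        tsum_nonneg fun nj => Real.rpow_nonneg (abs_nonneg _) _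
      calc (∑' nj : ℕ × ℕ, |xs.1 nj.1 ((fun j => T (x j)) nj.2)| ^ p) ^ (1 / p)
          = (‖T‖ ^ p * ∑' nj : ℕ × ℕ, |ys nj.1 (x nj.2)| ^ p) ^ (1 / p) := by
            rw [← tsum_mul_left]
            exact congrArg (· ^ (1 / p)) (tsum_congr hkey)
        _ = ‖T‖ * (∑' nj : ℕ × ℕ, |ys nj.1 (x nj.2)| ^ p) ^ (1 / p) := by
            rw [Real.mul_rpow (Real.rpow_nonneg hTn.le _) hsnn, rpow_p_inv hp hTn.le]
        _ ≤ ‖T‖ * midNorm p x := by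
            refine mul_le_mul_of_nonneg_left ?_ hTn.le
            exact le_ciSup (mid_bddAbove hp hx) (⟨ys, hysW, hys1⟩ :
              {xs : ℕ → E →L[ℝ] ℝ // WSummable p xs ∧ wNorm p xs ≤ 1})
  refine ⟨part1, part2, ?_⟩
  -- Part 3
  intro C hC0 hle
  refine T.opNorm_le_bound hC0 fun v => ?_
  set x : ℕ → E := fun j => if j = 0 then v else 0 with hxdef
  have hzero : ∀ (g : E →L[ℝ] ℝ) (j : ℕ), j ≠ 0 → |g (x j)| ^ p = 0 := by
    intro g j hj
    simp [hxdef, if_neg hj, Real.zero_rpow hpne]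
  have hxmid : MidSummable p x := by
    constructor
    · intro f
      refine summable_of_ne_finset_zero (s := {0}) fun j hj => ?_
      exact hzero f j (by simpa using hj)
    · intro xs hxs
      rw [summable_prod_of_nonneg (Pi.le_def.mpr fun nj => by
        simp only [Pi.zero_apply]
        exact Real.rpow_nonneg (abs_nonneg _) _)]
      constructor
      · intro n
        refine summable_of_ne_finset_zero (s := {0}) fun j hj => ?_
        exact hzero (xs n) j (by simpa using hj)
      · have hcol : ∀ n, ∑' j, |xs n (x j)| ^ p = |xs n v| ^ p := by
          intro n
          rw [tsum_eq_single 0 (fun j hj => hzero (xs n) j hj)]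
          simp [hxdef]
        have hrw : (fun n => ∑' j, |xs n (x j)| ^ p) = fun n => |xs n v| ^ p :=
          funext hcol
        rw [hrw]
        exact hxs (ContinuousLinearMap.apply ℝ ℝ v)
  have hupper : midNorm p x ≤ ‖v‖ := by
    unfold midNorm
    refine Real.iSup_le (fun xs => ?_) (norm_nonneg v)
    have hsum2 : Summable fun nj : ℕ × ℕ => |xs.1 nj.1 (x nj.2)| ^ p := hxmid.2 xs.1 xs.2.1
    have hcol : ∑' nj : ℕ × ℕ, |xs.1 nj.1 (x nj.2)| ^ p = ∑' n, |xs.1 n v| ^ p := by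
      rw [Summable.tsum_prod hsum2]
      refine tsum_congr fun n => ?_
      rw [tsum_eq_single 0 (fun j hj => hzero (xs.1 n) j hj)]
      simp [hxdef]
    rcases eq_or_ne v 0 with rfl | hv
    · have h0 : ∀ n : ℕ, |xs.1 n (0 : E)| ^ p = 0 := by
        intro n
        simp [Real.zero_rpow hpne]
      rw [hcol, tsum_congr h0, tsum_zero, Real.zero_rpow (by positivity)]
      simp
    · have hvn : 0 < ‖v‖ := norm_pos_iff.mpr hv
      set Φv : (E →L[ℝ] ℝ) →L[ℝ] ℝ := ‖v‖⁻¹ • ContinuousLinearMap.apply ℝ ℝ v with hΦv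
      have hΦv1 : ‖Φv‖ ≤ 1 := by
        refine ContinuousLinearMap.opNorm_le_bound _ zero_le_one fun g => ?_
        have h1 : Φv g = ‖v‖⁻¹ * g v := by simp [hΦv]
        rw [h1]
        calc ‖‖v‖⁻¹ * g v‖ = ‖v‖⁻¹ * ‖g v‖ := by rw [norm_mul, norm_inv, norm_norm]
          _ ≤ ‖v‖⁻¹ * (‖g‖ * ‖v‖) := mul_le_mul_of_nonneg_left (g.le_opNorm v) (by positivity)
          _ = ‖v‖⁻¹ * ‖v‖ * ‖g‖ := by ring
          _ = 1 * ‖g‖ := by rw [inv_mul_cancel₀ hvn.ne']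
      have hkey : ∀ n, |xs.1 n v| ^ p = ‖v‖ ^ p * |Φv (xs.1 n)| ^ p := by
        intro n
        have h1 : Φv (xs.1 n) = ‖v‖⁻¹ * xs.1 n v := by simp [hΦv]
        rw [h1, abs_mul, abs_inv, abs_norm, ← Real.mul_rpow hvn.le (by positivity),
          ← mul_assoc, mul_inv_cancel₀ hvn.ne', one_mul]
      have hsnn : 0 ≤ ∑' n, |Φv (xs.1 n)| ^ p :=
        tsum_nonneg fun n => Real.rpow_nonneg (abs_nonneg _) _
      calc (∑' nj : ℕ × ℕ, |xs.1 nj.1 (x nj.2)| ^ p) ^ (1 / p)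
          = (‖v‖ ^ p * ∑' n, |Φv (xs.1 n)| ^ p) ^ (1 / p) := by
            rw [hcol, ← tsum_mul_left]
            exact congrArg (· ^ (1 / p)) (tsum_congr hkey)
        _ = ‖v‖ * (∑' n, |Φv (xs.1 n)| ^ p) ^ (1 / p) := by
            rw [Real.mul_rpow (Real.rpow_nonneg hvn.le _) hsnn, rpow_p_inv hp hvn.le]
        _ ≤ ‖v‖ * 1 := mul_le_mul_of_nonneg_left
            ((le_wNorm hp xs.2.1 Φv hΦv1).trans xs.2.2) hvn.le
        _ = ‖v‖ := mul_one _
  have hTx : MidSummable p fun j => T (x j) := part1 x hxmid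
  have hlower : ‖T v‖ ≤ midNorm p fun j => T (x j) := by
    obtain ⟨f, hf1, hfv⟩ := exists_dual_vector'' ℝ (T v)
    set xs0 : ℕ → F →L[ℝ] ℝ := fun n => if n = 0 then f else 0 with hxs0
    have hxs0z : ∀ (w : F) (n : ℕ), n ≠ 0 → |xs0 n w| ^ p = 0 := by
      intro w n hn
      simp [hxs0, if_neg hn, Real.zero_rpow hpne]
    have hxs0W : WSummable p xs0 := by
      intro Φ
      refine summable_of_ne_finset_zero (s := {0}) fun n hn => ?_
      have hn' : n ≠ 0 := by simpa using hn
      simp [hxs0, if_neg hn', Real.zero_rpow hpne]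
    have hxs0n : wNorm p xs0 ≤ 1 := by
      unfold wNorm
      refine Real.iSup_le (fun Φ => ?_) zero_le_one
      have hcol : ∑' n, |Φ.1 (xs0 n)| ^ p = |Φ.1 f| ^ p := by
        rw [tsum_eq_single 0 (fun n hn => by
          simp [hxs0, if_neg hn, Real.zero_rpow hpne])]
        simp [hxs0]
      rw [hcol, rpow_p_inv hp (abs_nonneg _)]
      calc |Φ.1 f| ≤ ‖Φ.1‖ * ‖f‖ := Φ.1.le_opNorm f
        _ ≤ 1 * 1 := mul_le_mul Φ.2 hf1 (norm_nonneg _) zero_le_one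
        _ = 1 := mul_one _
    have hdbl : ∑' nj : ℕ × ℕ, |xs0 nj.1 (T (x nj.2))| ^ p = |f (T v)| ^ p := by
      rw [tsum_eq_single ((0, 0) : ℕ × ℕ) ?_]
      · simp [hxs0, hxdef]
      · rintro ⟨n, j⟩ hnj
        rcases eq_or_ne n 0 with rfl | hn
        · have hj : j ≠ 0 := by
            intro hj0
            exact hnj (by simp [hj0])
          have : x j = 0 := by simp [hxdef, if_neg hj]
          simp [this, Real.zero_rpow hpne]
        · exact hxs0z _ n hn
    have hle2 : (∑' nj : ℕ × ℕ, |xs0 nj.1 ((fun j => T (x j)) nj.2)| ^ p) ^ (1 / p)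
        ≤ midNorm p fun j => T (x j) :=
      le_ciSup (mid_bddAbove hp hTx) (⟨xs0, hxs0W, hxs0n⟩ :
        {xs : ℕ → F →L[ℝ] ℝ // WSummable p xs ∧ wNorm p xs ≤ 1})
    calc ‖T v‖ = (|f (T v)| ^ p) ^ (1 / p) := by
          rw [rpow_p_inv hp (abs_nonneg _), hfv]
          exact (abs_norm _).symm
      _ = (∑' nj : ℕ × ℕ, |xs0 nj.1 ((fun j => T (x j)) nj.2)| ^ p) ^ (1 / p) := by
          rw [hdbl]
      _ ≤ midNorm p fun j => T (x j) := hle2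
  calc ‖T v‖ ≤ midNorm p fun j => T (x j) := hlower
    _ ≤ C * midNorm p x := hle x hxmid
    _ ≤ C * ‖v‖ := mul_le_mul_of_nonneg_left hupper hC0
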